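/- Let K be a real symmetric positive semidefinite n×n matrix and let γ ≥ 0. Then K − γG has at most one negative eigenvalue: if its eigenvalues are listed in nondecreasing order λ_1 ≤ λ_2 ≤ … ≤ λ_n, then λ_2 ≥ 0. Here G = G(a,b,c) is the canonical gradient matrix of a triplet of distinct indices. -/

import Mathlib

open scoped Matrix


/-- The canonical gradient matrix `G(a,b,c)` of a triplet of indices. -/
def canonG {n : ℕ} (a b c : Fin n) : Matrix (Fin n) (Fin n) ℝ :=
  fun i j =>
    if (i = a ∧ j = b) ∨ (i = b ∧ j = a) then -2
    else if (i = a ∧ j = c) ∨ (i = c ∧ j = a) then 2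
    else if i = b ∧ j = b then 1
    else if i = c ∧ j = c then -1
    else 0

lemma vecMulVec_mulVec' {n : ℕ} (u v x : Fin n → ℝ) :
    Matrix.vecMulVec u v *ᵥ x = (v ⬝ᵥ x) • u := by
  funext i
  simp [Matrix.mulVec, dotProduct, Matrix.vecMulVec_apply, Finset.mul_sum,
    mul_comm, mul_assoc, mul_left_comm]

lemma canonG_decomp {n : ℕ} (a b c : Fin n) (hab : a ≠ b) (hac : a ≠ c) (hbc : b ≠ c) :
    canonG a b c = (2⁻¹ : ℝ) •
      (Matrix.vecMulVec (Pi.single b 1 - Pi.single c 1)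
          (Pi.single b 1 + Pi.single c 1 - Pi.single a 4) +
        Matrix.vecMulVec (Pi.single b 1 + Pi.single c 1 - Pi.single a 4)
          (Pi.single b 1 - Pi.single c 1)) := by
  ext i j
  simp only [canonG, Matrix.smul_apply, Matrix.add_apply, Matrix.vecMulVec_apply,
    Pi.sub_apply, Pi.add_apply, Pi.smul_apply, Pi.single_apply, smul_eq_mul]
  by_cases h1 : i = a <;> by_cases h2 : i = b <;> by_cases h3 : i = c <;>
    by_cases h4 : j = a <;> by_cases h5 : j = b <;> by_cases h6 : j = c <;>
    simp_all <;> norm_num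

lemma canonG_quad_zero {n : ℕ} (a b c : Fin n) (hab : a ≠ b) (hac : a ≠ c) (hbc : b ≠ c)
    (x : Fin n → ℝ) (hx : x b = x c) : x ⬝ᵥ (canonG a b c *ᵥ x) = 0 := by
  have hu : (Pi.single b 1 - Pi.single c 1 : Fin n → ℝ) ⬝ᵥ x = 0 := by
    simp [sub_dotProduct, single_dotProduct, hx]
  have hu' : x ⬝ᵥ (Pi.single b 1 - Pi.single c 1 : Fin n → ℝ) = 0 := by
    rw [dotProduct_comm]; exact hu
  rw [canonG_decomp a b c hab hac hbc]
  rw [Matrix.smul_mulVec, Matrix.add_mulVec, vecMulVec_mulVec', vecMulVec_mulVec', hu]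
  simp only [dotProduct_add, dotProduct_smul, smul_eq_mul, hu',
    smul_dotProduct, add_dotProduct, zero_smul, zero_dotProduct,
    dotProduct_zero, smul_zero, add_zero, zero_add, mul_zero]

/-- If `K` is PSD and `γ ≥ 0`, then `K - γ • G(a,b,c)` has at most one negative
eigenvalue: listing its eigenvalues in nondecreasing order, the second smallest is
nonnegative. -/
theorem atMostOne_neg_eigenvalue_sub_smul_canonG {n : ℕ} (hn : 3 ≤ n) (a b c : Fin n)
    (hab : a ≠ b) (hac : a ≠ c) (hbc : b ≠ c)
    (K : Matrix (Fin n) (Fin n) ℝ) (hK : K.PosSemidef) (γ : ℝ) (hγ : 0 ≤ γ)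
    (hM : (K - γ • canonG a b c).IsHermitian) :
    (Finset.univ.filter fun i : Fin n => hM.eigenvalues i < 0).card ≤ 1 := by
  by_contra h
  push_neg at h
  obtain ⟨i, hi, j, hj, hij⟩ := Finset.one_lt_card.mp h
  rw [Finset.mem_filter] at hi hj
  set M : Matrix (Fin n) (Fin n) ℝ := K - γ • canonG a b c with hMdef
  set v : Fin n → ℝ := ⇑(hM.eigenvectorBasis i) with hv
  set w : Fin n → ℝ := ⇑(hM.eigenvectorBasis j) with hw
  have horth := orthonormal_iff_ite.mp hM.eigenvectorBasis.orthonormal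
  have hip : ∀ p q : Fin n, (inner ℝ (hM.eigenvectorBasis p) (hM.eigenvectorBasis q) : ℝ) =
      ⇑(hM.eigenvectorBasis p) ⬝ᵥ ⇑(hM.eigenvectorBasis q) := by
    intro p q
    rw [EuclideanSpace.inner_eq_star_dotProduct]
    exact dotProduct_comm _ _
  have hvv : v ⬝ᵥ v = 1 := by rw [hv, ← hip, horth]; simp
  have hww : w ⬝ᵥ w = 1 := by rw [hw, ← hip, horth]; simp
  have hvw : v ⬝ᵥ w = 0 := by rw [hv, hw, ← hip, horth]; simp [hij]
  have hwv : w ⬝ᵥ v = 0 := by rw [dotProduct_comm]; exact hvw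
  have hMv : M *ᵥ v = hM.eigenvalues i • v := hM.mulVec_eigenvectorBasis i
  have hMw : M *ᵥ w = hM.eigenvalues j • w := hM.mulVec_eigenvectorBasis j
  have key : ∀ α β : ℝ, α ≠ 0 ∨ β ≠ 0 → α * (v b - v c) + β * (w b - w c) = 0 → False := by
    intro α β hαβ hsol
    set x : Fin n → ℝ := α • v + β • w with hxdef
    have hxbc : x b = x c := by
      simp only [hxdef, Pi.add_apply, Pi.smul_apply, smul_eq_mul]
      linarith
    have hq : x ⬝ᵥ (canonG a b c *ᵥ x) = 0 := canonG_quad_zero a b c hab hac hbc x hxbc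
    have hKx : 0 ≤ x ⬝ᵥ (K *ᵥ x) := by
      have := hK.dotProduct_mulVec_nonneg x
      simpa using this
    have h1 : 0 ≤ x ⬝ᵥ (M *ᵥ x) := by
      rw [hMdef, Matrix.sub_mulVec, dotProduct_sub, Matrix.smul_mulVec,
        dotProduct_smul, hq]
      simpa using hKx
    have h2 : x ⬝ᵥ (M *ᵥ x) = α ^ 2 * hM.eigenvalues i + β ^ 2 * hM.eigenvalues j := by
      rw [hxdef]
      rw [Matrix.mulVec_add, Matrix.mulVec_smul, Matrix.mulVec_smul, hMv, hMw]
      simp only [add_dotProduct, dotProduct_add, smul_dotProduct,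
        dotProduct_smul, smul_eq_mul, hvv, hww, hvw, hwv]
      ring
    have hneg : x ⬝ᵥ (M *ᵥ x) < 0 := by
      rw [h2]
      rcases hαβ with hα | hβ
      · have h0 : 0 < α ^ 2 := by positivity
        nlinarith [sq_nonneg β, hi.2, hj.2]
      · have h0 : 0 < β ^ 2 := by positivity
        nlinarith [sq_nonneg α, hi.2, hj.2]
    linarith
  by_cases hd : v b - v c = 0
  · exact key 1 0 (Or.inl one_ne_zero) (by rw [hd]; ring)
  · exact key (w b - w c) (-(v b - v c)) (Or.inr (by simp only [ne_eq, neg_eq_zero]; exact hd)) (by ring)
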